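/- arXiv:cs/0512079 — 4 statements merged into one kernel-verified Lean document; each statement's English description precedes it below -/
import Mathlib

section
/- Let n ≥ 1 and 0 ≤ d ≤ n be integers, x ∈ ℝⁿ and θ ∈ ℝ^d with A := Σ_{i=1}^{d}(x_i − θ_i)² + Σ_{i=d+1}^{n} x_i² > 0, and let c > 0 be any constant (the prior value, independent of τ). Then the function Φ(τ) := −log( f(x|θ,τ) · c / ((n/2)^{1/2} τ^{d/2−1}) ) on (0,∞) attains a unique global minimum at τ* = (n−d+2)/A; equivalently, the invariant MML precision estimator satisfies 1/τ* = (Σ_{i=1}^{d}(x_i−θ_i)² + Σ_{i=d+1}^{n} x_i²)/(n−d+2). -/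
open MeasureTheory

/-- The function `Φ(τ) = −log( f(x|θ,τ) · c / ((n/2)^{1/2} τ^{d/2−1}) )` attains a unique
global minimum on `(0,∞)` at `τ* = (n−d+2)/A`, where
`A = Σ_{i<d}(x_i−θ_i)² + Σ_{i≥d} x_i² > 0`; equivalently `1/τ* = A/(n−d+2)`. -/
theorem mml_precision_estimator
    (n d : ℕ) (hn : 1 ≤ n) (hdn : d ≤ n)
    (x : Fin n → ℝ) (θ : Fin d → ℝ) (c : ℝ) (hc : 0 < c)
    (A : ℝ)
    (hA : A = ∑ i : Fin n,
      (if h : (i : ℕ) < d then x i - θ ⟨(i : ℕ), h⟩ else x i) ^ 2)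
    (hApos : 0 < A)
    (f : ℝ → ℝ)
    (hf : ∀ τ : ℝ, f τ =
      (τ / (2 * Real.pi)) ^ ((n : ℝ) / 2) *
        Real.exp (-(τ / 2) *
          ∑ i : Fin n, (if h : (i : ℕ) < d then x i - θ ⟨(i : ℕ), h⟩ else x i) ^ 2))
    (Φ : ℝ → ℝ)
    (hΦ : ∀ τ : ℝ, 0 < τ →
      Φ τ = -Real.log (f τ * c / (Real.sqrt ((n : ℝ) / 2) * τ ^ ((d : ℝ) / 2 - 1))))
    (τstar : ℝ) (hτstar : τstar = ((n : ℝ) - (d : ℝ) + 2) / A) :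
    0 < τstar ∧
    (∀ τ : ℝ, 0 < τ → τ ≠ τstar → Φ τstar < Φ τ) ∧
    1 / τstar = A / ((n : ℝ) - (d : ℝ) + 2) := by
  have hdn' : (d:ℝ) ≤ (n:ℝ) := by exact_mod_cast hdn
  have hk2 : (0:ℝ) < (n:ℝ) - d + 2 := by linarith
  have hτpos : 0 < τstar := by rw [hτstar]; positivity
  set k : ℝ := ((n:ℝ) - d + 2)/2 with hkdef
  have hkpos : 0 < k := by rw [hkdef]; linarith
  set C : ℝ := ((n:ℝ)/2) * Real.log (2*Real.pi) - Real.log c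
      + Real.log (Real.sqrt ((n:ℝ)/2)) with hCdef
  have hnpos : (0:ℝ) < (n:ℝ) := by exact_mod_cast hn
  have hform : ∀ τ : ℝ, 0 < τ → Φ τ = (A/2)*τ - k * Real.log τ + C := by
    intro τ hτ
    rw [hΦ τ hτ, hf τ, ← hA]
    have h2π : (0:ℝ) < 2*Real.pi := by positivity
    have hτ2π : 0 < τ/(2*Real.pi) := by positivity
    have hsqrt : 0 < Real.sqrt ((n:ℝ)/2) := Real.sqrt_pos.2 (by positivity)
    rw [Real.log_div (by positivity) (by positivity),
        Real.log_mul (by positivity) (ne_of_gt hc),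
        Real.log_mul (ne_of_gt hsqrt) (by positivity),
        Real.log_mul (by positivity) (Real.exp_ne_zero _),
        Real.log_exp, Real.log_rpow hτ2π, Real.log_rpow hτ,
        Real.log_div (ne_of_gt hτ) (ne_of_gt h2π)]
    rw [hkdef, hCdef]; ring
  have hAk : A * τstar = 2*k := by
    rw [hτstar, hkdef]; field_simp
  refine ⟨hτpos, ?_, by rw [hτstar, one_div_div]⟩
  intro τ hτ hne
  rw [hform τ hτ, hform τstar hτpos]
  have ht : 0 < τ/τstar := div_pos hτ hτpos
  have hne' : τ/τstar ≠ 1 := by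
    intro h
    exact hne ((div_eq_one_iff_eq (ne_of_gt hτpos)).1 h)
  have hlog : Real.log (τ/τstar) < τ/τstar - 1 :=
    Real.log_lt_sub_one_of_pos ht hne'
  rw [Real.log_div (ne_of_gt hτ) (ne_of_gt hτpos)] at hlog
  have h1 : (A/2)*τ = k*(τ/τstar) := by
    field_simp
    nlinarith [hAk]
  have h2 : (A/2)*τstar = k := by linarith [hAk]
  nlinarith [mul_lt_mul_of_pos_left hlog hkpos, h1, h2]
end

section
/- Let ν > 0, λ > 0 and let d ≥ 1 be an integer. For the product density π(θ|λ) := ∏_{i=1}^d π_{λ,ν}(θ_i) on ℝ^d, the Fisher information with respect to the scale parameter λ is E(λ) := −∫_{ℝ^d} (∂²/∂λ²) log π(θ|λ) · π(θ|λ) dθ = ν d/(4λ²). -/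
open MeasureTheory

/-- `η(ν) = (Γ(3/ν)/Γ(1/ν))^{1/2}`. -/
noncomputable def ggdEta (ν : ℝ) : ℝ :=
  Real.sqrt (Real.Gamma (3 / ν) / Real.Gamma (1 / ν))

/-- The generalized Gaussian density
`π_{λ,ν}(θ) = (ν η(ν)/(2Γ(1/ν))) λ^{1/2} exp(−(η(ν) λ^{1/2} |θ|)^ν)`. -/
noncomputable def ggd (ν lam θ : ℝ) : ℝ :=
  ν * ggdEta ν / (2 * Real.Gamma (1 / ν)) * Real.sqrt lam *
    Real.exp (-((ggdEta ν * Real.sqrt lam * |θ|) ^ ν))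

open Real Set Filter

-- core integrability lemma: b=1 case
lemma integrableOn_aux1 {p q : ℝ} (hp : 0 < p) (hq : -1 < q) :
    IntegrableOn (fun x : ℝ => x ^ q * Real.exp (-(x ^ p))) (Ioi 0) := by
  have hs : 0 < (q + 1) / p := div_pos (by linarith) hp
  have hbase : IntegrableOn (fun y : ℝ => y ^ ((q + 1) / p - 1) * Real.exp (-y)) (Ioi 0) := by
    have := Real.GammaIntegral_convergent hs
    refine this.congr_fun (fun x _ => ?_) measurableSet_Ioi
    ring
  have h2 := (integrableOn_Ioi_comp_rpow_iff'
      (fun y : ℝ => y ^ ((q + 1) / p - 1) * Real.exp (-y)) hp.ne').mpr hbase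
  refine h2.congr_fun (fun x hx => ?_) measurableSet_Ioi
  have hx0 : (0:ℝ) < x := hx
  simp only [smul_eq_mul]
  rw [← Real.rpow_mul hx0.le, ← mul_assoc, ← Real.rpow_add hx0]
  congr 2
  field_simp
  ring

lemma integrableOn_aux {p q b : ℝ} (hp : 0 < p) (hq : -1 < q) (hb : 0 < b) :
    IntegrableOn (fun x : ℝ => x ^ q * Real.exp (-b * x ^ p)) (Ioi 0) := by
  have hib : 0 < b ^ (-p⁻¹) := rpow_pos_of_pos hb _
  suffices IntegrableOn (fun x ↦ (b ^ (-p⁻¹)) ^ q * (x ^ q * Real.exp (-x ^ p))) (Ioi 0) by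
    rw [show (0:ℝ) = b ^ (-p⁻¹) * 0 by rw [mul_zero], ← integrableOn_Ioi_comp_mul_left_iff _ _ hib]
    refine this.congr_fun (fun _ hx => ?_) measurableSet_Ioi
    dsimp only
    rw [← mul_assoc, mul_rpow, mul_rpow, ← rpow_mul (z := p), neg_mul, neg_mul, inv_mul_cancel₀,
      rpow_neg_one, mul_inv_cancel_left₀]
    all_goals linarith [mem_Ioi.mp hx]
  refine Integrable.const_mul ?_ _
  rw [← IntegrableOn]
  exact integrableOn_aux1 hp hq

lemma integrable_abs_aux {p q b : ℝ} (hp : 0 < p) (hq : 0 ≤ q) (hb : 0 < b) :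
    Integrable (fun x : ℝ => |x| ^ q * Real.exp (-b * |x| ^ p)) := by
  have hmeas : AEStronglyMeasurable (fun x : ℝ => |x| ^ q * Real.exp (-b * |x| ^ p)) volume := by
    refine Measurable.aestronglyMeasurable ?_
    exact (measurable_abs.pow_const q).mul
      (((measurable_abs.pow_const p).const_mul (-b)).exp)
  rw [← integrableOn_univ, ← Iio_union_Ici (a := (0:ℝ)), integrableOn_union,
    integrableOn_Ici_iff_integrableOn_Ioi]
  have hIoi : IntegrableOn (fun x : ℝ => |x| ^ q * Real.exp (-b * |x| ^ p)) (Ioi 0) := by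
    refine (integrableOn_aux (q := q) hp (by linarith) hb).congr_fun (fun x hx => ?_) measurableSet_Ioi
    rw [abs_of_pos hx]
  refine ⟨?_, hIoi⟩
  rw [← (Measure.measurePreserving_neg (volume : Measure ℝ)).integrableOn_comp_preimage
      (Homeomorph.neg ℝ).measurableEmbedding]
  simp only [Function.comp_def, abs_neg, neg_preimage, neg_Iio, neg_zero]
  exact hIoi


lemma ggdEta_pos {ν : ℝ} (hν : 0 < ν) : 0 < ggdEta ν := by
  apply Real.sqrt_pos.mpr
  exact div_pos (Real.Gamma_pos_of_pos (div_pos (by norm_num) hν)) (Real.Gamma_pos_of_pos (div_pos one_pos hν))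

lemma ggd_pos {ν lam : ℝ} (hν : 0 < ν) (hlam : 0 < lam) (x : ℝ) : 0 < ggd ν lam x := by
  have h1 := ggdEta_pos hν
  have h2 := Real.Gamma_pos_of_pos (div_pos one_pos hν)
  unfold ggd
  exact mul_pos (mul_pos (div_pos (mul_pos hν h1) (by linarith)) (Real.sqrt_pos.mpr hlam))
    (Real.exp_pos _)

-- rewrite the exponent
lemma ggd_eq {ν lam : ℝ} (hν : 0 < ν) (hlam : 0 < lam) (x : ℝ) :
    ggd ν lam x = ν * ggdEta ν / (2 * Real.Gamma (1 / ν)) * Real.sqrt lam *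
      Real.exp (-((ggdEta ν * Real.sqrt lam) ^ ν * |x| ^ ν)) := by
  unfold ggd
  rw [Real.mul_rpow (mul_nonneg (ggdEta_pos hν).le (Real.sqrt_nonneg _)) (abs_nonneg x)]

lemma ggd_integrable {ν lam : ℝ} (hν : 0 < ν) (hlam : 0 < lam) :
    Integrable (fun x : ℝ => ggd ν lam x) := by
  have hb : 0 < (ggdEta ν * Real.sqrt lam) ^ ν :=
    Real.rpow_pos_of_pos (mul_pos (ggdEta_pos hν) (Real.sqrt_pos.mpr hlam)) ν
  have h := ((integrable_abs_aux (q := 0) hν le_rfl hb).const_mul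
    (ν * ggdEta ν / (2 * Real.Gamma (1 / ν)) * Real.sqrt lam))
  refine h.congr (Filter.Eventually.of_forall fun x => ?_)
  dsimp only
  rw [ggd_eq hν hlam, Real.rpow_zero, neg_mul]
  ring

lemma ggd_moment_integrable {ν lam : ℝ} (hν : 0 < ν) (hlam : 0 < lam) :
    Integrable (fun x : ℝ => |x| ^ ν * ggd ν lam x) := by
  have hb : 0 < (ggdEta ν * Real.sqrt lam) ^ ν :=
    Real.rpow_pos_of_pos (mul_pos (ggdEta_pos hν) (Real.sqrt_pos.mpr hlam)) ν
  have h := ((integrable_abs_aux (q := ν) hν hν.le hb).const_mul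
    (ν * ggdEta ν / (2 * Real.Gamma (1 / ν)) * Real.sqrt lam))
  refine h.congr (Filter.Eventually.of_forall fun x => ?_)
  dsimp only
  rw [ggd_eq hν hlam, neg_mul]
  ring

lemma ggd_integral_one {ν lam : ℝ} (hν : 0 < ν) (hlam : 0 < lam) :
    ∫ x : ℝ, ggd ν lam x = 1 := by
  have hη := ggdEta_pos hν
  have hsl : 0 < Real.sqrt lam := Real.sqrt_pos.mpr hlam
  have ha : 0 < ggdEta ν * Real.sqrt lam := mul_pos hη hsl
  have hb : 0 < (ggdEta ν * Real.sqrt lam) ^ ν := Real.rpow_pos_of_pos ha ν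
  have hΓ : 0 < Real.Gamma (1 / ν) := Real.Gamma_pos_of_pos (div_pos one_pos hν)
  have heq : (fun x : ℝ => ggd ν lam x) = fun x : ℝ =>
      ν * ggdEta ν / (2 * Real.Gamma (1 / ν)) * Real.sqrt lam *
        Real.exp (-(ggdEta ν * Real.sqrt lam) ^ ν * |x| ^ ν) := by
    funext x; rw [ggd_eq hν hlam, neg_mul]
  rw [heq, integral_const_mul,
    integral_comp_abs (f := fun t : ℝ => Real.exp (-(ggdEta ν * Real.sqrt lam) ^ ν * t ^ ν)),
    integral_exp_neg_mul_rpow hν hb]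
  have h1 : ((ggdEta ν * Real.sqrt lam) ^ ν) ^ (-1 / ν) = (ggdEta ν * Real.sqrt lam)⁻¹ := by
    rw [← Real.rpow_mul ha.le, show ν * (-1 / ν) = -1 by field_simp, Real.rpow_neg_one]
  rw [h1, Real.Gamma_add_one (by positivity : (1:ℝ)/ν ≠ 0)]
  field_simp

lemma ggd_moment {ν lam : ℝ} (hν : 0 < ν) (hlam : 0 < lam) :
    ∫ x : ℝ, |x| ^ ν * ggd ν lam x = ((ggdEta ν * Real.sqrt lam) ^ ν)⁻¹ / ν := by
  have hη := ggdEta_pos hν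
  have hsl : 0 < Real.sqrt lam := Real.sqrt_pos.mpr hlam
  have ha : 0 < ggdEta ν * Real.sqrt lam := mul_pos hη hsl
  have hb : 0 < (ggdEta ν * Real.sqrt lam) ^ ν := Real.rpow_pos_of_pos ha ν
  have hΓ : 0 < Real.Gamma (1 / ν) := Real.Gamma_pos_of_pos (div_pos one_pos hν)
  have heq : (fun x : ℝ => |x| ^ ν * ggd ν lam x) = fun x : ℝ =>
      ν * ggdEta ν / (2 * Real.Gamma (1 / ν)) * Real.sqrt lam *
        (|x| ^ ν * Real.exp (-(ggdEta ν * Real.sqrt lam) ^ ν * |x| ^ ν)) := by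
    funext x; rw [ggd_eq hν hlam, neg_mul]; ring
  rw [heq, integral_const_mul,
    integral_comp_abs (f := fun t : ℝ =>
      t ^ ν * Real.exp (-(ggdEta ν * Real.sqrt lam) ^ ν * t ^ ν)),
    integral_rpow_mul_exp_neg_mul_rpow hν (by linarith) hb]
  have h1 : ((ggdEta ν * Real.sqrt lam) ^ ν) ^ (-(ν + 1) / ν)
      = ((ggdEta ν * Real.sqrt lam) ^ ν)⁻¹ * (ggdEta ν * Real.sqrt lam)⁻¹ := by
    rw [← Real.rpow_mul ha.le, show ν * (-(ν + 1) / ν) = -ν + -1 by field_simp; ring,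
      Real.rpow_add ha, Real.rpow_neg_one, Real.rpow_neg ha.le]
  have h2 : (ν + 1) / ν = 1 / ν + 1 := by rw [add_div, div_self hν.ne', add_comm]
  rw [h1, h2, Real.Gamma_add_one (by positivity : (1:ℝ)/ν ≠ 0)]
  rw [show ((ggdEta ν * Real.sqrt lam) ^ ν)⁻¹ * (ggdEta ν * Real.sqrt lam)⁻¹ * (1 / ν) *
      (1 / ν * Real.Gamma (1 / ν)) = ((ggdEta ν * Real.sqrt lam) ^ ν)⁻¹ *
      ((ggdEta ν * Real.sqrt lam)⁻¹ * (1 / ν) * (1 / ν * Real.Gamma (1 / ν))) by ring]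
  field_simp

lemma log_ggd {ν : ℝ} (hν : 0 < ν) {l : ℝ} (hl : 0 < l) (x : ℝ) :
    Real.log (ggd ν l x) = Real.log (ν * ggdEta ν / (2 * Real.Gamma (1 / ν)))
      + Real.log l / 2 - ggdEta ν ^ ν * l ^ (ν / 2) * |x| ^ ν := by
  have hη := ggdEta_pos hν
  have hsl : 0 < Real.sqrt l := Real.sqrt_pos.mpr hl
  have hΓ : 0 < Real.Gamma (1 / ν) := Real.Gamma_pos_of_pos (div_pos one_pos hν)
  have hC : 0 < ν * ggdEta ν / (2 * Real.Gamma (1 / ν)) :=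
    div_pos (mul_pos hν hη) (by linarith)
  have hsr : (Real.sqrt l) ^ ν = l ^ (ν / 2) := by
    rw [Real.sqrt_eq_rpow, ← Real.rpow_mul hl.le]
    congr 1; ring
  rw [ggd_eq hν hl, Real.mul_rpow hη.le (Real.sqrt_nonneg l), hsr,
    Real.log_mul (mul_pos hC hsl).ne' (Real.exp_pos _).ne',
    Real.log_mul hC.ne' hsl.ne', Real.log_exp, Real.log_sqrt hl.le]
  ring

lemma log_prod_ggd {ν : ℝ} (hν : 0 < ν) {l : ℝ} (hl : 0 < l) {d : ℕ} (θ : Fin d → ℝ) :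
    Real.log (∏ i, ggd ν l (θ i)) =
      (d : ℝ) * Real.log (ν * ggdEta ν / (2 * Real.Gamma (1 / ν)))
        + (d : ℝ) * Real.log l / 2 - ggdEta ν ^ ν * l ^ (ν / 2) * ∑ i, |θ i| ^ ν := by
  rw [Real.log_prod (fun i _ => (ggd_pos hν hl (θ i)).ne')]
  simp_rw [log_ggd hν hl]
  rw [Finset.sum_sub_distrib, Finset.sum_add_distrib, ← Finset.mul_sum]
  simp only [Finset.sum_const, Finset.sum_div, Finset.card_univ, Fintype.card_fin, nsmul_eq_mul]
  ring

lemma deriv2_log_ggd {ν lam : ℝ} (hν : 0 < ν) (hlam : 0 < lam) {d : ℕ} (θ : Fin d → ℝ) :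
    deriv (deriv (fun l : ℝ => Real.log (∏ i, ggd ν l (θ i)))) lam =
      (d : ℝ) * (-(lam ^ 2)⁻¹) / 2 -
        ggdEta ν ^ ν * (ν / 2 * ((ν / 2 - 1) * lam ^ (ν / 2 - 1 - 1))) * ∑ i, |θ i| ^ ν := by
  set A := ggdEta ν ^ ν with hA
  set S := ∑ i, |θ i| ^ ν with hS
  set K := Real.log (ν * ggdEta ν / (2 * Real.Gamma (1 / ν))) with hK
  have hG1 : ∀ l ∈ Ioi (0:ℝ), deriv (fun l : ℝ => Real.log (∏ i, ggd ν l (θ i))) l =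
      (d : ℝ) * l⁻¹ / 2 - A * (ν / 2 * l ^ (ν / 2 - 1)) * S := by
    intro l hl
    have hl' : (0:ℝ) < l := hl
    have hev : (fun l : ℝ => Real.log (∏ i, ggd ν l (θ i))) =ᶠ[nhds l]
        (fun l : ℝ => (d : ℝ) * K + (d : ℝ) * Real.log l / 2 - A * l ^ (ν / 2) * S) :=
      Filter.eventually_of_mem (Ioi_mem_nhds hl') (fun y hy => log_prod_ggd hν hy θ)
    rw [hev.deriv_eq]
    have h := ((((Real.hasDerivAt_log hl'.ne').const_mul (d : ℝ)).div_const 2).const_add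
        ((d : ℝ) * K)).sub
      (((Real.hasDerivAt_rpow_const (p := ν / 2) (Or.inl hl'.ne')).const_mul A).mul_const S)
    exact h.deriv
  have hev2 : deriv (fun l : ℝ => Real.log (∏ i, ggd ν l (θ i))) =ᶠ[nhds lam]
      (fun l : ℝ => (d : ℝ) * l⁻¹ / 2 - A * (ν / 2 * l ^ (ν / 2 - 1)) * S) :=
    Filter.eventually_of_mem (Ioi_mem_nhds hlam) hG1
  rw [hev2.deriv_eq]
  have h2 := (((hasDerivAt_inv hlam.ne').const_mul (d : ℝ)).div_const 2).sub
    ((((Real.hasDerivAt_rpow_const (p := ν / 2 - 1) (Or.inl hlam.ne')).const_mul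
      (ν / 2)).const_mul A).mul_const S)
  exact h2.deriv

lemma prod_ite_helper {ν lam : ℝ} {d : ℕ} (i : Fin d) (θ : Fin d → ℝ) :
    (∏ j, if j = i then |θ j| ^ ν * ggd ν lam (θ j) else ggd ν lam (θ j)) =
      |θ i| ^ ν * ∏ j, ggd ν lam (θ j) := by
  have h : ∀ j : Fin d, (if j = i then |θ j| ^ ν * ggd ν lam (θ j) else ggd ν lam (θ j)) =
      (if j = i then |θ j| ^ ν else 1) * ggd ν lam (θ j) := by
    intro j; by_cases hj : j = i <;> simp [hj]
  simp only [h, Finset.prod_mul_distrib]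
  rw [Finset.prod_ite_eq' Finset.univ i (fun j => |θ j| ^ ν)]
  simp

lemma integrable_moment_term {ν lam : ℝ} (hν : 0 < ν) (hlam : 0 < lam) {d : ℕ} (i : Fin d) :
    Integrable (fun θ : Fin d → ℝ => |θ i| ^ ν * ∏ j, ggd ν lam (θ j)) := by
  have heq : (fun θ : Fin d → ℝ => |θ i| ^ ν * ∏ j, ggd ν lam (θ j)) =
      fun θ : Fin d → ℝ =>
        ∏ j, (if j = i then |θ j| ^ ν * ggd ν lam (θ j) else ggd ν lam (θ j)) := by
    funext θ; rw [prod_ite_helper]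
  rw [heq]
  have hf : ∀ j : Fin d, Integrable
      (fun x : ℝ => if j = i then |x| ^ ν * ggd ν lam x else ggd ν lam x) := by
    intro j
    by_cases hj : j = i
    · simpa [hj] using ggd_moment_integrable hν hlam
    · simpa [hj] using ggd_integrable hν hlam
  exact Integrable.fintype_prod (𝕜 := ℝ) (E := ℝ)
    (f := fun j (x : ℝ) => if j = i then |x| ^ ν * ggd ν lam x else ggd ν lam x) hf

lemma integral_moment_term {ν lam : ℝ} (hν : 0 < ν) (hlam : 0 < lam) {d : ℕ} (i : Fin d) :
    ∫ θ : Fin d → ℝ, |θ i| ^ ν * ∏ j, ggd ν lam (θ j)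
      = ((ggdEta ν * Real.sqrt lam) ^ ν)⁻¹ / ν := by
  have heq : (fun θ : Fin d → ℝ => |θ i| ^ ν * ∏ j, ggd ν lam (θ j)) =
      fun θ : Fin d → ℝ =>
        ∏ j, (if j = i then |θ j| ^ ν * ggd ν lam (θ j) else ggd ν lam (θ j)) := by
    funext θ; rw [prod_ite_helper]
  rw [heq]
  have h0 : ∫ θ : Fin d → ℝ,
      ∏ j, (if j = i then |θ j| ^ ν * ggd ν lam (θ j) else ggd ν lam (θ j)) =
      ∏ j, ∫ x : ℝ, (if j = i then |x| ^ ν * ggd ν lam x else ggd ν lam x) :=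
    MeasureTheory.integral_fintype_prod_volume_eq_prod (𝕜 := ℝ) (ι := Fin d) (E := fun _ => ℝ)
      (fun j (x : ℝ) => if j = i then |x| ^ ν * ggd ν lam x else ggd ν lam x)
  rw [h0]
  have h1 : ∀ j : Fin d,
      (∫ x : ℝ, if j = i then |x| ^ ν * ggd ν lam x else ggd ν lam x) =
      (if j = i then ((ggdEta ν * Real.sqrt lam) ^ ν)⁻¹ / ν else 1) := by
    intro j
    by_cases hj : j = i
    · simp only [hj, if_true]; exact ggd_moment hν hlam
    · simp only [hj, if_false]; exact ggd_integral_one hν hlam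
  rw [Finset.prod_congr rfl (fun j _ => h1 j),
    Finset.prod_ite_eq' Finset.univ i (fun _ => ((ggdEta ν * Real.sqrt lam) ^ ν)⁻¹ / ν)]
  simp

lemma integral_prod_ggd {ν lam : ℝ} (hν : 0 < ν) (hlam : 0 < lam) (d : ℕ) :
    ∫ θ : Fin d → ℝ, ∏ i, ggd ν lam (θ i) = 1 := by
  have h0 : ∫ θ : Fin d → ℝ, ∏ i, ggd ν lam (θ i)
      = (∫ x : ℝ, ggd ν lam x) ^ Fintype.card (Fin d) :=
    MeasureTheory.integral_fintype_prod_volume_eq_pow (𝕜 := ℝ) (ι := Fin d) (fun x => ggd ν lam x)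
  rw [h0, ggd_integral_one hν hlam, one_pow]

/-- The Fisher information of the product GGD `π(θ|λ) = ∏ᵢ π_{λ,ν}(θᵢ)` with respect to the
scale parameter `λ` equals `ν d/(4λ²)`:
`E(λ) = −∫_{ℝ^d} (∂²/∂λ²) log π(θ|λ) · π(θ|λ) dθ = ν d/(4λ²)`. -/
theorem ggd_scale_fisher_information
    (ν lam : ℝ) (hν : 0 < ν) (hlam : 0 < lam) (d : ℕ) (hd : 1 ≤ d) :
    -(∫ θ : Fin d → ℝ,
        deriv (deriv (fun l : ℝ => Real.log (∏ i, ggd ν l (θ i)))) lam *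
          ∏ i, ggd ν lam (θ i)) = ν * (d : ℝ) / (4 * lam ^ 2) := by
  have hη := ggdEta_pos hν
  have hsl : 0 < Real.sqrt lam := Real.sqrt_pos.mpr hlam
  have hA : 0 < ggdEta ν ^ ν := Real.rpow_pos_of_pos hη ν
  have ht : 0 < lam ^ (ν / 2) := Real.rpow_pos_of_pos hlam _
  set A := ggdEta ν ^ ν with hAdef
  set c2 := A * (ν / 2 * ((ν / 2 - 1) * lam ^ (ν / 2 - 1 - 1))) with hc2
  set M := ((ggdEta ν * Real.sqrt lam) ^ ν)⁻¹ / ν with hM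
  have hintP : Integrable (fun θ : Fin d → ℝ => ∏ i, ggd ν lam (θ i)) :=
    Integrable.fintype_prod (𝕜 := ℝ) (E := ℝ) (f := fun _ x => ggd ν lam x)
      (fun _ => ggd_integrable hν hlam)
  have hintS : Integrable (fun θ : Fin d → ℝ =>
      ∑ i, |θ i| ^ ν * ∏ j, ggd ν lam (θ j)) :=
    integrable_finset_sum _ (fun i _ => integrable_moment_term hν hlam i)
  have heq : (fun θ : Fin d → ℝ =>
      deriv (deriv (fun l : ℝ => Real.log (∏ i, ggd ν l (θ i)))) lam * ∏ i, ggd ν lam (θ i)) =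
      fun θ : Fin d → ℝ =>
        ((d : ℝ) * (-(lam ^ 2)⁻¹) / 2) * (∏ i, ggd ν lam (θ i)) -
          c2 * ∑ i, |θ i| ^ ν * ∏ j, ggd ν lam (θ j) := by
    funext θ
    rw [deriv2_log_ggd hν hlam θ, ← Finset.sum_mul]
    ring
  rw [heq, integral_sub (hintP.const_mul _) (hintS.const_mul _), integral_const_mul,
    integral_const_mul, integral_prod_ggd hν hlam d,
    integral_finset_sum _ (fun i _ => integrable_moment_term hν hlam i)]
  have hIM : ∀ i : Fin d, ∫ θ : Fin d → ℝ, |θ i| ^ ν * ∏ j, ggd ν lam (θ j) = M :=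
    fun i => integral_moment_term hν hlam i
  rw [Finset.sum_congr rfl (fun i _ => hIM i), Finset.sum_const, Finset.card_univ,
    Fintype.card_fin, nsmul_eq_mul]
  -- now pure arithmetic
  have hb : (ggdEta ν * Real.sqrt lam) ^ ν = A * lam ^ (ν / 2) := by
    rw [Real.mul_rpow hη.le (Real.sqrt_nonneg lam), Real.sqrt_eq_rpow,
      ← Real.rpow_mul hlam.le]
    congr 2
    ring
  have hpow : lam ^ (ν / 2 - 1 - 1) = lam ^ (ν / 2) * (lam ^ 2)⁻¹ := by
    rw [show ν / 2 - 1 - 1 = ν / 2 + (-2 : ℝ) by ring, Real.rpow_add hlam,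
      show (-2 : ℝ) = ((-2 : ℤ) : ℝ) by norm_num, Real.rpow_intCast, zpow_neg]
    norm_num
  rw [hM, hb, hc2, hpow]
  have hlam2 : (0:ℝ) < lam ^ 2 := by positivity
  field_simp
  ring
end

section
/- Let ν > 0, let d ≥ 1 be an integer, and let θ ∈ ℝ^d with S := Σ_{i=1}^d |θ_i|^ν > 0. Define Ψ(λ) := (1/2) log(νd/4) − log λ − log π(θ|λ) for λ > 0 (this is Ψ(λ) = −log( π(θ|λ)/E(λ)^{1/2} ) with E(λ) = νd/(4λ²)). Then Ψ attains a unique global minimum on (0,∞), at λ* = (d+2)^{2/ν} / ( ν^{2/ν} η(ν)² S^{2/ν} ), and the second derivative of Ψ at the minimizer equals Ψ''(λ*) = ν(d+2)/(4 (λ*)²). -/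
open MeasureTheory

/-- `Ψ(λ) = (1/2) log(νd/4) − log λ − log π(θ|λ)` attains a unique global minimum on `(0,∞)`
at `λ* = (d+2)^{2/ν}/(ν^{2/ν} η(ν)² S^{2/ν})` where `S = Σᵢ |θᵢ|^ν > 0`, and
`Ψ''(λ*) = ν(d+2)/(4 λ*²)`. -/
theorem ggd_scale_mml_estimator
    (ν : ℝ) (hν : 0 < ν) (d : ℕ) (hd : 1 ≤ d) (θ : Fin d → ℝ)
    (S : ℝ) (hS : S = ∑ i, |θ i| ^ ν) (hSpos : 0 < S)
    (Ψ : ℝ → ℝ)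
    (hΨ : ∀ lam : ℝ, 0 < lam →
      Ψ lam = 1 / 2 * Real.log (ν * (d : ℝ) / 4) - Real.log lam -
        Real.log (∏ i, ggd ν lam (θ i)))
    (lamstar : ℝ)
    (hlamstar : lamstar = ((d : ℝ) + 2) ^ (2 / ν) /
      (ν ^ (2 / ν) * ggdEta ν ^ 2 * S ^ (2 / ν))) :
    0 < lamstar ∧
    (∀ lam : ℝ, 0 < lam → lam ≠ lamstar → Ψ lamstar < Ψ lam) ∧
    deriv (deriv Ψ) lamstar = ν * ((d : ℝ) + 2) / (4 * lamstar ^ 2) := by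
  have hΓ1 : 0 < Real.Gamma (1/ν) := Real.Gamma_pos_of_pos (by positivity)
  have hΓ3 : 0 < Real.Gamma (3/ν) := Real.Gamma_pos_of_pos (by positivity)
  have hη : 0 < ggdEta ν := Real.sqrt_pos.mpr (div_pos hΓ3 hΓ1)
  set C : ℝ := ν * ggdEta ν / (2 * Real.Gamma (1/ν)) with hCdef
  have hCpos : 0 < C := by rw [hCdef]; positivity
  set c : ℝ := ν / 2 with hcdef
  have hcpos : 0 < c := by positivity
  set a : ℝ := (d:ℝ)/2 + 1 with hadef
  have hapos : 0 < a := by positivity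
  set b : ℝ := ggdEta ν ^ ν * S with hbdef
  have hbpos : 0 < b := mul_pos (Real.rpow_pos_of_pos hη ν) hSpos
  set K : ℝ := 1/2 * Real.log (ν * (d:ℝ) / 4) - (d:ℝ) * Real.log C with hKdef
  -- formula for Ψ on (0, ∞)
  have hform : ∀ lam : ℝ, 0 < lam → Ψ lam = K - a * Real.log lam + b * lam ^ c := by
    intro lam hl
    have hsl : 0 < Real.sqrt lam := Real.sqrt_pos.mpr hl
    have hlogg : ∀ i : Fin d, Real.log (ggd ν lam (θ i)) =
        Real.log C + Real.log lam / 2 - ggdEta ν ^ ν * lam ^ c * |θ i| ^ ν := by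
      intro i
      have hexp : (ggdEta ν * Real.sqrt lam * |θ i|) ^ ν
          = ggdEta ν ^ ν * lam ^ c * |θ i| ^ ν := by
        rw [Real.mul_rpow (by positivity) (abs_nonneg _),
          Real.mul_rpow hη.le (Real.sqrt_nonneg _), Real.sqrt_eq_rpow,
          ← Real.rpow_mul hl.le]
        rw [show 1/2 * ν = c by rw [hcdef]; ring]
      unfold ggd
      rw [← hCdef, Real.log_mul (by positivity) (Real.exp_ne_zero _),
        Real.log_mul hCpos.ne' hsl.ne', Real.log_exp, Real.log_sqrt hl.le, hexp]
      ring
    have hprod : Real.log (∏ i, ggd ν lam (θ i)) =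
        (d:ℝ) * Real.log C + (d:ℝ) * (Real.log lam / 2) - b * lam ^ c := by
      rw [Real.log_prod (fun i _ => by unfold ggd; rw [← hCdef]; positivity)]
      simp only [hlogg]
      rw [Finset.sum_sub_distrib, Finset.sum_add_distrib, Finset.sum_const,
        Finset.sum_const, ← Finset.mul_sum, ← hS]
      simp [Finset.card_univ]
      ring
    rw [hΨ lam hl, hprod, hKdef, hadef]
    ring
  -- lamstar is positive and lamstar ^ c identity
  set X : ℝ := ((d:ℝ)+2) / (ν * ggdEta ν ^ ν * S) with hXdef
  have hXpos : 0 < X := by rw [hXdef]; positivity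
  have hA : (0:ℝ) < (d:ℝ) + 2 := by positivity
  have hlamX : lamstar = X ^ (2/ν) := by
    rw [hlamstar, hXdef, Real.div_rpow hA.le (by positivity),
      Real.mul_rpow (by positivity) hSpos.le,
      Real.mul_rpow hν.le (Real.rpow_nonneg hη.le _),
      ← Real.rpow_mul hη.le]
    rw [show ν * (2/ν) = ((2:ℕ):ℝ) by push_cast; field_simp, Real.rpow_natCast]
  have hlpos : 0 < lamstar := by rw [hlamX]; exact Real.rpow_pos_of_pos hXpos _
  have hlc : lamstar ^ c = X := by
    rw [hlamX, ← Real.rpow_mul hXpos.le,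
      show 2/ν * c = 1 by rw [hcdef]; field_simp, Real.rpow_one]
  have hkey : b * c * lamstar ^ c = a := by
    rw [hlc, hXdef, hbdef, hadef, hcdef]
    have h1 : ggdEta ν ^ ν ≠ 0 := (Real.rpow_pos_of_pos hη ν).ne'
    field_simp
  have hblc : b * lamstar ^ c = a / c := by
    rw [eq_div_iff hcpos.ne']; linear_combination hkey
  refine ⟨hlpos, ?_, ?_⟩
  · -- unique global minimum
    intro lam hl hne
    set s : ℝ := Real.log lam - Real.log lamstar with hsdef
    have hsne : c * s ≠ 0 := by
      refine mul_ne_zero hcpos.ne' ?_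
      rw [hsdef, sub_ne_zero]
      intro h
      exact hne (by rw [← Real.exp_log hl, h, Real.exp_log hlpos])
    have hexp := Real.add_one_lt_exp hsne
    have hE : lam ^ c = lamstar ^ c * Real.exp (c * s) := by
      rw [Real.rpow_def_of_pos hl, Real.rpow_def_of_pos hlpos, ← Real.exp_add]
      congr 1
      rw [hsdef]; ring
    have h2 : a / c * (c * s + 1) = a * s + a / c := by field_simp
    have h3 := mul_lt_mul_of_pos_left hexp (div_pos hapos hcpos)
    rw [hform lam hl, hform lamstar hlpos, hE, ← mul_assoc, hblc]
    have h4 : a * s = a * Real.log lam - a * Real.log lamstar := by rw [hsdef]; ring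
    nlinarith [hblc]
  · -- second derivative
    set G : ℝ → ℝ := fun x => -a / x + b * c * x ^ (c-1) with hGdef
    have hderivΨ : ∀ x : ℝ, 0 < x → deriv Ψ x = G x := by
      intro x hx
      have hev : Ψ =ᶠ[nhds x] fun y => K - a * Real.log y + b * y ^ c :=
        Filter.eventuallyEq_of_mem (Ioi_mem_nhds hx) (fun y hy => hform y hy)
      rw [hev.deriv_eq]
      have h1 : HasDerivAt (fun y : ℝ => K - a * Real.log y + b * y ^ c)
          (-a / x + b * c * x ^ (c-1)) x := by
        have hlog := (Real.hasDerivAt_log hx.ne').const_mul a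
        have hrp := (Real.hasDerivAt_rpow_const (p := c) (Or.inl hx.ne')).const_mul b
        have := ((hasDerivAt_const x K).sub hlog).add hrp
        have this : HasDerivAt (fun y : ℝ => K - a * Real.log y + b * y ^ c)
            (0 - a * x⁻¹ + b * (c * x ^ (c - 1))) x := this
        convert this using 1
        ring
      exact h1.deriv
    have hev2 : deriv Ψ =ᶠ[nhds lamstar] G :=
      Filter.eventuallyEq_of_mem (Ioi_mem_nhds hlpos) (fun y hy => hderivΨ y hy)
    rw [hev2.deriv_eq]
    have hGeq : G = fun y : ℝ => -a * y⁻¹ + b * c * y ^ (c-1) := by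
      funext y; simp only [hGdef, div_eq_mul_inv]
    have hh := ((hasDerivAt_inv hlpos.ne').const_mul (-a)).add
      ((Real.hasDerivAt_rpow_const (p := c-1) (Or.inl hlpos.ne')).const_mul (b*c))
    have hh : HasDerivAt (fun y : ℝ => -a * y⁻¹ + b * c * y ^ (c-1))
        (-a * -(lamstar ^ 2)⁻¹ + b * c * ((c - 1) * lamstar ^ (c - 1 - 1))) lamstar := hh
    rw [hGeq, hh.deriv]
    have h5 : lamstar ^ (c-1-1) = lamstar ^ c / lamstar ^ 2 := by
      rw [show c-1-1 = c - ((2:ℕ):ℝ) by push_cast; ring, Real.rpow_sub hlpos,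
        Real.rpow_natCast]
    rw [h5]
    simp only [hcdef, hadef] at hkey ⊢
    have hl2 : lamstar ^ 2 ≠ 0 := by positivity
    field_simp
    linear_combination 8*(ν-2)*hkey
end

section
/- Let 0 < ν < 1 and x ∈ ℝ, and let h_x(θ) := (x − θ)² + |θ|^ν. If θ* ∈ ℝ is a global minimizer of h_x over ℝ, then either θ* = 0 or |θ*| ≥ (ν(1−ν)/2)^{1/(2−ν)}. In particular, nonzero values of the GGD-MAP estimator are bounded away from zero by a positive constant depending only on ν. -/
/-- Nonzero global minimizers of `h_x(θ) = (x−θ)² + |θ|^ν` with `0 < ν < 1` are bounded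
away from zero: if `θ*` is a global minimizer then `θ* = 0` or
`|θ*| ≥ (ν(1−ν)/2)^{1/(2−ν)}`. -/
theorem ggd_map_minimizer_bounded_away_from_zero
    (ν x : ℝ) (h1 : 0 < ν) (h2 : ν < 1) (θstar : ℝ)
    (hmin : ∀ t : ℝ, (x - θstar) ^ 2 + |θstar| ^ ν ≤ (x - t) ^ 2 + |t| ^ ν) :
    θstar = 0 ∨ (ν * (1 - ν) / 2) ^ (1 / (2 - ν)) ≤ |θstar| := by
  rcases eq_or_ne θstar 0 with h0 | h0
  · exact Or.inl h0
  right
  set a : ℝ := |θstar| with ha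
  have hapos : 0 < a := abs_pos.mpr h0
  -- comparison with t = 0
  have c0 := hmin 0
  simp only [sub_zero, abs_zero] at c0
  rw [Real.zero_rpow (ne_of_gt h1)] at c0
  -- comparison with t = 2θ*
  have c2 := hmin (2 * θstar)
  have habs2 : |2 * θstar| = 2 * a := by rw [abs_mul]; norm_num; rfl
  rw [habs2, Real.mul_rpow (by norm_num) hapos.le] at c2
  -- Bernoulli: 2^ν ≤ 1 + ν
  have hbern : (2 : ℝ) ^ ν ≤ 1 + ν := by
    have := rpow_one_add_le_one_add_mul_self (s := 1) (by norm_num) h1.le h2.le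
    norm_num at this
    linarith
  -- add the two comparisons: (2 - 2^ν) a^ν ≤ 2 θ*²
  have key : (1 - ν) * a ^ ν ≤ 2 * θstar ^ 2 := by
    have hane : (0:ℝ) ≤ a ^ ν := Real.rpow_nonneg hapos.le ν
    nlinarith [c0, c2, hbern, sq_nonneg θstar, sq_nonneg (x - θstar)]
  -- hence a^(2-ν) ≥ (1-ν)/2 ≥ ν(1-ν)/2
  have hsq : θstar ^ 2 = a ^ (2:ℝ) := by
    rw [show ((2:ℝ)) = ((2:ℕ):ℝ) by norm_num, Real.rpow_natCast]
    exact (sq_abs θstar).symm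
  have h2ν : (0:ℝ) < 2 - ν := by linarith
  have hmain : ν * (1 - ν) / 2 ≤ a ^ (2 - ν) := by
    have haν : (0:ℝ) < a ^ ν := Real.rpow_pos_of_pos hapos ν
    have : a ^ (2 - ν) * a ^ ν = a ^ (2:ℝ) := by
      rw [← Real.rpow_add hapos]; ring_nf
    have hineq : (1 - ν) / 2 ≤ a ^ (2 - ν) := by
      have h' : (1 - ν) * a ^ ν ≤ 2 * (a ^ (2 - ν) * a ^ ν) := by
        rw [this, ← hsq]; exact key
      nlinarith [haν, h']
    have : ν * (1 - ν) / 2 ≤ (1 - ν) / 2 := by nlinarith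
    linarith
  -- take rpow 1/(2-ν)
  calc (ν * (1 - ν) / 2) ^ (1 / (2 - ν))
      ≤ (a ^ (2 - ν)) ^ (1 / (2 - ν)) := by
        apply Real.rpow_le_rpow (by nlinarith) hmain (one_div_nonneg.mpr (by linarith))
    _ = a := by
        rw [← Real.rpow_mul hapos.le, mul_one_div, div_self (ne_of_gt h2ν), Real.rpow_one]
end
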